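/- For every s with 0 ≤ s ≤ q−1, the polynomial u₀^q divides u₁^{s+1}·(d₂₂*)^{q−s−1} + (u₁*)^{q−s}·d₂₂^s in R₂, and the quotient h_s = (u₁^{s+1}·(d₂₂*)^{q−s−1} + (u₁*)^{q−s}·d₂₂^s)/u₀^q is a polynomial fixed by every element of SL₂(F_q), i.e., h_s ∈ R₂^{SL₂}. -/

import Mathlib

open MvPolynomial

noncomputable section

abbrev R2 (F : Type) [Field F] : Type := MvPolynomial (Fin 4) F

/-- The action of `A ∈ GL₂(F)` on `R₂ = F[x₁,x₂,y₁,y₂]` (variables `X 0, X 1, X 2, X 3`). -/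
def act {F : Type} [Field F] (A : GL (Fin 2) F) : R2 F →ₐ[F] R2 F :=
  aeval ![C ((A.val.det)⁻¹ * A.val 1 1) * X 0 - C ((A.val.det)⁻¹ * A.val 1 0) * X 1,
          C ((A.val.det)⁻¹ * A.val 0 0) * X 1 - C ((A.val.det)⁻¹ * A.val 0 1) * X 0,
          C (A.val 0 0) * X 2 + C (A.val 0 1) * X 3,
          C (A.val 1 0) * X 2 + C (A.val 1 1) * X 3]

/-- The invariant ring `R₂^G` for a subgroup `G ≤ GL₂(F)`. -/
def invariantRing {F : Type} [Field F] (G : Subgroup (GL (Fin 2) F)) : Subalgebra F (R2 F) where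
  carrier := {f | ∀ A ∈ G, act A f = f}
  mul_mem' := fun hf hg A hA => by rw [map_mul, hf A hA, hg A hA]
  add_mem' := fun hf hg A hA => by rw [map_add, hf A hA, hg A hA]
  one_mem' := fun A _ => map_one (act A)
  zero_mem' := fun A _ => map_zero (act A)
  algebraMap_mem' := fun r A _ => (act A).commutes r

/-- `SL₂(F)` as a subgroup of `GL₂(F)`. -/
def SL2 (F : Type) [Field F] : Subgroup (GL (Fin 2) F) where
  carrier := {A | A.val.det = 1}
  one_mem' := by simp
  mul_mem' := by
    intro a b ha hb
    simp only [Set.mem_setOf_eq, Units.val_mul, Matrix.det_mul] at *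
    rw [ha, hb, mul_one]
  inv_mem' := by
    intro a ha
    have h : ((a⁻¹).val * a.val).det = 1 := by
      rw [← Units.val_mul, inv_mul_cancel, Units.val_one, Matrix.det_one]
    simp only [Matrix.det_mul] at h
    rw [Set.mem_setOf_eq] at ha ⊢
    rw [ha, mul_one] at h
    exact h

/-- `P₂(F)`: upper triangular matrices in `SL₂(F)` with 1's on the diagonal. -/
def P2 (F : Type) [Field F] : Subgroup (GL (Fin 2) F) where
  carrier := {A | A.val 0 0 = 1 ∧ A.val 1 1 = 1 ∧ A.val 1 0 = 0}
  one_mem' := by simp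
  mul_mem' := by
    intro a b ha hb
    obtain ⟨ha1, ha2, ha3⟩ := ha
    obtain ⟨hb1, hb2, hb3⟩ := hb
    refine ⟨?_, ?_, ?_⟩ <;>
      simp [Units.val_mul, Matrix.mul_apply, Fin.sum_univ_two, ha1, ha2, ha3, hb1, hb2, hb3]
  inv_mem' := by
    intro a ha
    obtain ⟨ha1, ha2, ha3⟩ := ha
    have hdet : a.val.det = 1 := by
      rw [Matrix.det_fin_two, ha1, ha2, ha3]; ring
    have hinv : (a⁻¹).val = a.val⁻¹ := by
      simp [Matrix.coe_units_inv]
    refine ⟨?_, ?_, ?_⟩ <;>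
      simp [hinv, Matrix.inv_def, hdet, Matrix.adjugate_fin_two, ha1, ha2, ha3]

def d22 (F : Type) [Field F] (q : ℕ) : R2 F := X 1 * X 0 ^ q - X 0 * X 1 ^ q
def d22s (F : Type) [Field F] (q : ℕ) : R2 F := X 2 * X 3 ^ q - X 3 * X 2 ^ q
def u0 (F : Type) [Field F] : R2 F := X 0 * X 2 + X 1 * X 3
def u1 (F : Type) [Field F] (q : ℕ) : R2 F := X 0 ^ q * X 2 + X 1 ^ q * X 3
def u1s (F : Type) [Field F] (q : ℕ) : R2 F := X 0 * X 2 ^ q + X 1 * X 3 ^ q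
def phi1 (F : Type) [Field F] : R2 F := X 0
def phi2 (F : Type) [Field F] (q : ℕ) : R2 F := X 1 ^ q - X 1 * X 0 ^ (q - 1)
def phi1s (F : Type) [Field F] : R2 F := X 3
def phi2s (F : Type) [Field F] (q : ℕ) : R2 F := X 2 ^ q - X 2 * X 3 ^ (q - 1)


/-- `X 1` is prime in `F[x₀,x₁,x₂]`. -/
lemma primeX1 (F : Type) [Field F] : Prime (X 1 : MvPolynomial (Fin 3) F) := by
  let e3 := (renameEquiv F (Equiv.swap (0:Fin 3) 1)).trans (MvPolynomial.finSuccEquiv F 2)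
  have he : e3 (X 1) = Polynomial.X := by
    show ((renameEquiv F (Equiv.swap (0:Fin 3) 1)).trans (MvPolynomial.finSuccEquiv F 2)) (X 1) = _
    rw [AlgEquiv.trans_apply, renameEquiv_apply, rename_X]
    rw [show (Equiv.swap (0:Fin 3) 1) 1 = 0 by simp]
    exact finSuccEquiv_X_zero
  rw [← MulEquiv.prime_iff e3.toRingEquiv.toMulEquiv]
  show Prime (e3 (X 1))
  rw [he]
  exact Polynomial.prime_X

/-- `u₀ = x₁y₁ + x₂y₂` is prime in `R₂`. -/
lemma u0_prime (F : Type) [Field F] : Prime (u0 F) := by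
  classical
  have hX1 := primeX1 F
  have hndvd : ∀ j : Fin 3, j ≠ 1 → ¬ (X 1 : MvPolynomial (Fin 3) F) ∣ X j := by
    rintro j hj ⟨g, hg⟩
    have := congrArg (aeval (fun i : Fin 3 => if i = 1 then (0 : MvPolynomial (Fin 3) F) else X i)) hg
    simp [hj] at this
  set P : Polynomial (MvPolynomial (Fin 3) F) :=
    Polynomial.C (X 1) * Polynomial.X + Polynomial.C (X 0 * X 2) with hP
  have hprim : P.IsPrimitive := by
    intro r hr
    rw [Polynomial.C_dvd_iff_dvd_coeff] at hr
    have h1 : r ∣ X 1 := by have := hr 1; simpa [hP] using this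
    have h0 : r ∣ (X 0 * X 2 : MvPolynomial (Fin 3) F) := by have := hr 0; simpa [hP] using this
    obtain ⟨t, ht⟩ := h1
    rcases hX1.irreducible.isUnit_or_isUnit ht with h | h
    · exact h
    · exfalso
      obtain ⟨v, hv⟩ := isUnit_iff_exists_inv.mp h
      have hr' : r = X 1 * v := by rw [← mul_one r, ← hv, ← mul_assoc, ← ht]
      have : (X 1 : MvPolynomial (Fin 3) F) ∣ X 0 * X 2 := (Dvd.intro v hr'.symm).trans h0
      rcases hX1.2.2 _ _ this with h' | h'
      · exact hndvd 0 (by decide) h'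
      · exact hndvd 2 (by decide) h'
  set K := FractionRing (MvPolynomial (Fin 3) F)
  have hα : algebraMap (MvPolynomial (Fin 3) F) K (X 1) ≠ 0 := by
    simpa using (map_ne_zero_iff _ (IsFractionRing.injective (MvPolynomial (Fin 3) F) K)).mpr
      (MvPolynomial.X_ne_zero 1)
  have hmap : Irreducible (P.map (algebraMap (MvPolynomial (Fin 3) F) K)) := by
    set α := algebraMap (MvPolynomial (Fin 3) F) K (X 1)
    set β := algebraMap (MvPolynomial (Fin 3) F) K (X 0 * X 2)
    have hPm : P.map (algebraMap (MvPolynomial (Fin 3) F) K) =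
        Polynomial.C α * Polynomial.X + Polynomial.C β := by
      simp only [hP, Polynomial.map_add, Polynomial.map_mul, Polynomial.map_C, Polynomial.map_X]
      rfl
    rw [hPm]
    have hassoc : Associated (Polynomial.X - Polynomial.C (-(β/α)))
        (Polynomial.C α * Polynomial.X + Polynomial.C β) := by
      refine ⟨(Polynomial.isUnit_C.mpr (isUnit_iff_ne_zero.mpr hα)).unit, ?_⟩
      rw [IsUnit.unit_spec]
      rw [Polynomial.C_neg, sub_neg_eq_add, add_mul, ← Polynomial.C_mul, div_mul_cancel₀ _ hα]
      ring
    exact hassoc.irreducible (Polynomial.irreducible_X_sub_C _)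
  have hPirr : Irreducible P :=
    hprim.irreducible_of_irreducible_map_of_injective
      (IsFractionRing.injective (MvPolynomial (Fin 3) F) K) hmap
  have hPprime : Prime P := UniqueFactorizationMonoid.irreducible_iff_prime.mp hPirr
  have he4 : (MvPolynomial.finSuccEquiv F 3) (u0 F) = P := by
    have h1 : (X (1:Fin 4) : R2 F) = X (Fin.succ 0) := rfl
    have h2 : (X (2:Fin 4) : R2 F) = X (Fin.succ 1) := rfl
    have h3 : (X (3:Fin 4) : R2 F) = X (Fin.succ 2) := rfl
    rw [u0, h1, h2, h3, map_add, map_mul, map_mul, finSuccEquiv_X_zero, finSuccEquiv_X_succ,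
      finSuccEquiv_X_succ, finSuccEquiv_X_succ, hP, ← Polynomial.C_mul]
    ring
  rw [← MulEquiv.prime_iff (MvPolynomial.finSuccEquiv F 3).toRingEquiv.toMulEquiv]
  show Prime ((MvPolynomial.finSuccEquiv F 3) (u0 F))
  rw [he4]
  exact hPprime

/-- for `0 ≤ s ≤ q−1`, `u₀^q` divides
`u₁^{s+1}(d₂₂*)^{q−s−1} + (u₁*)^{q−s}d₂₂^s` in `R₂`, and the quotient `h_s`
is an `SL₂(F_q)`-invariant polynomial. -/
theorem stmt_7 (q : ℕ) (hq : IsPrimePow q) (F : Type) [Field F] [Fintype F]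
    (hF : Fintype.card F = q) :
    ∀ s ≤ q - 1,
      ∃ h : R2 F,
        u0 F ^ q * h =
          u1 F q ^ (s + 1) * d22s F q ^ (q - s - 1) + u1s F q ^ (q - s) * d22 F q ^ s ∧
        h ∈ invariantRing (SL2 F) := by
  classical
  haveI : CharP F (ringChar F) := ringChar.charP F
  obtain ⟨n, hp, hcard⟩ := FiniteField.card F (ringChar F)
  haveI : Fact (Nat.Prime (ringChar F)) := ⟨hp⟩
  have hq' : q = (ringChar F) ^ (n : ℕ) := by rw [← hF, hcard]
  have hfa : ∀ x y : R2 F, (x + y) ^ q = x ^ q + y ^ q := fun x y => by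
    rw [hq']; exact add_pow_char_pow x y (ringChar F) (n:ℕ)
  have hfs : ∀ x y : R2 F, (x - y) ^ q = x ^ q - y ^ q := fun x y => by
    rw [hq']; exact sub_pow_char_pow x y (n:ℕ)
  have hFq : ∀ c : F, c ^ q = c := fun c => by rw [← hF]; exact FiniteField.pow_card c
  have hq2 : 2 ≤ q := hq.two_le
  obtain ⟨k, rfl⟩ : ∃ k, q = k + 1 := ⟨q - 1, by omega⟩
  set q := k + 1 with hqdef
  have hprime := u0_prime F
  have hu0ne : u0 F ≠ 0 := hprime.ne_zero
  -- Frobenius expansions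
  have hu0q : u0 F ^ q = X 0 ^ q * X 2 ^ q + X 1 ^ q * X 3 ^ q := by
    rw [u0, hfa, mul_pow, mul_pow]
  have hu1sq : u1s F q ^ q = X 0 ^ q * (X 2 ^ q) ^ q + X 1 ^ q * (X 3 ^ q) ^ q := by
    rw [u1s, hfa, mul_pow, mul_pow]
  have heq : d22s F q ^ q = X 2 ^ q * (X 3 ^ q) ^ q - X 3 ^ q * (X 2 ^ q) ^ q := by
    rw [d22s, hfs, mul_pow, mul_pow]
  -- the key multiplicative relation
  have hmul : u1 F q * u1s F q = u0 F ^ q * u0 F + d22 F q * d22s F q := by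
    rw [hu0q, u1, u1s, u0, d22, d22s]; ring
  -- d22s is nonzero and not divisible by u0
  have hd22sne : d22s F q ≠ 0 := by
    intro h
    have h1 := congrArg (aeval ![0, 0, 1, (Polynomial.X : Polynomial F)] : R2 F →ₐ[F] Polynomial F) h
    simp [d22s] at h1
    have h3 : (Polynomial.X : Polynomial F) ^ q = Polynomial.X := by
      rwa [sub_eq_zero] at h1
    have h4 := congrArg Polynomial.natDegree h3
    rw [Polynomial.natDegree_X_pow, Polynomial.natDegree_X] at h4
    omega
  have hnd : ¬ u0 F ∣ d22s F q := by
    rintro ⟨g, hg⟩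
    have h0 := congrArg (aeval ![0, 0, X 2, X 3] : R2 F →ₐ[F] R2 F) hg
    rw [map_mul] at h0
    have h1 : (aeval ![0, 0, X 2, X 3] : R2 F →ₐ[F] R2 F) (u0 F) = 0 := by simp [u0]
    have h2 : (aeval ![0, 0, X 2, X 3] : R2 F →ₐ[F] R2 F) (d22s F q) = d22s F q := by
      simp [d22s]
    rw [h2, h1, zero_mul] at h0
    exact hd22sne h0
  -- the quotient for s = 0
  set cstar : R2 F := ∑ i ∈ Finset.range (k + 2), (X 3 ^ k) ^ i * (X 2 ^ k) ^ (k + 1 - i)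
    with hcstar
  have hE2 : X 2 * (X 3 ^ q) ^ q - X 3 * (X 2 ^ q) ^ q = d22s F q * cstar := by
    have g := geom_sum₂_mul (X 3 ^ k : R2 F) (X 2 ^ k) (k + 2)
    have hexp : ∀ i : ℕ, k + 2 - 1 - i = k + 1 - i := fun i => by omega
    simp only [hexp] at g
    rw [d22s, hcstar]
    linear_combination (-(X 2 * X 3) : R2 F) * g
  have base : u1 F q * d22s F q ^ k + u1s F q ^ q = u0 F ^ q * cstar := by
    refine mul_left_cancel₀ hd22sne ?_
    calc d22s F q * (u1 F q * d22s F q ^ k + u1s F q ^ q)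
        = u1 F q * (d22s F q ^ k * d22s F q) + u1s F q ^ q * d22s F q := by ring
      _ = u1 F q * d22s F q ^ q + u1s F q ^ q * d22s F q := by rw [← pow_succ]
      _ = u0 F ^ q * (X 2 * (X 3 ^ q) ^ q - X 3 * (X 2 ^ q) ^ q) := by
          rw [heq, hu1sq, hu0q, u1, d22s]; ring
      _ = u0 F ^ q * (d22s F q * cstar) := by rw [hE2]
      _ = d22s F q * (u0 F ^ q * cstar) := by ring
  -- divisibility by induction on s
  have hdvd : ∀ s, s ≤ q - 1 →
      ∃ h : R2 F,
        u1 F q ^ (s + 1) * d22s F q ^ (q - s - 1) + u1s F q ^ (q - s) * d22 F q ^ s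
          = u0 F ^ q * h := by
    intro s
    induction s with
    | zero =>
      intro _
      refine ⟨cstar, ?_⟩
      rw [show q - 0 - 1 = k from by omega, show q - 0 = q from by omega, pow_zero, pow_one,
        mul_one]
      exact base
    | succ s ih =>
      intro hs1
      have hs : s ≤ q - 1 := by omega
      obtain ⟨h, hh⟩ := ih hs
      set m := k - 1 - s with hm
      rw [show q - s - 1 = m + 1 from by omega, show q - s = m + 2 from by omega] at hh
      rw [show q - (s + 1) - 1 = m from by omega, show q - (s + 1) = m + 1 from by omega]
      have hstep : d22s F q *
          (u1 F q ^ (s + 1 + 1) * d22s F q ^ m + u1s F q ^ (m + 1) * d22 F q ^ (s + 1))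
          = u0 F ^ q * (u1 F q * h - u0 F * (u1s F q ^ (m + 1) * d22 F q ^ s)) := by
        linear_combination (-(u1s F q ^ (m + 1) * d22 F q ^ s)) * hmul + u1 F q * hh
      have hdv : u0 F ^ q ∣ d22s F q *
          (u1 F q ^ (s + 1 + 1) * d22s F q ^ m + u1s F q ^ (m + 1) * d22 F q ^ (s + 1)) :=
        ⟨_, hstep⟩
      obtain ⟨h', hh'⟩ := hprime.pow_dvd_of_dvd_mul_left q hnd hdv
      exact ⟨h', hh'⟩
  -- invariance of the generators
  have hgen : ∀ A : GL (Fin 2) F, A ∈ SL2 F →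
      act A (u0 F) = u0 F ∧ act A (u1 F q) = u1 F q ∧ act A (u1s F q) = u1s F q ∧
      act A (d22 F q) = d22 F q ∧ act A (d22s F q) = d22s F q := by
    intro A hA
    have hA' : A.val.det = 1 := hA
    have e0 : act A (X 0) = C (A.val 1 1) * X 0 - C (A.val 1 0) * X 1 := by simp [act, hA']
    have e1 : act A (X 1) = C (A.val 0 0) * X 1 - C (A.val 0 1) * X 0 := by simp [act, hA']
    have e2 : act A (X 2) = C (A.val 0 0) * X 2 + C (A.val 0 1) * X 3 := by simp [act, hA']
    have e3 : act A (X 3) = C (A.val 1 0) * X 2 + C (A.val 1 1) * X 3 := by simp [act, hA']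
    have e0q : act A (X 0) ^ q = C (A.val 1 1) * X 0 ^ q - C (A.val 1 0) * X 1 ^ q := by
      rw [e0, hfs, mul_pow, mul_pow, ← map_pow, ← map_pow, hFq, hFq]
    have e1q : act A (X 1) ^ q = C (A.val 0 0) * X 1 ^ q - C (A.val 0 1) * X 0 ^ q := by
      rw [e1, hfs, mul_pow, mul_pow, ← map_pow, ← map_pow, hFq, hFq]
    have e2q : act A (X 2) ^ q = C (A.val 0 0) * X 2 ^ q + C (A.val 0 1) * X 3 ^ q := by
      rw [e2, hfa, mul_pow, mul_pow, ← map_pow, ← map_pow, hFq, hFq]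
    have e3q : act A (X 3) ^ q = C (A.val 1 0) * X 2 ^ q + C (A.val 1 1) * X 3 ^ q := by
      rw [e3, hfa, mul_pow, mul_pow, ← map_pow, ← map_pow, hFq, hFq]
    have hdet : A.val 0 0 * A.val 1 1 - A.val 0 1 * A.val 1 0 = 1 := by
      rw [← Matrix.det_fin_two]; exact hA'
    have hC : (C (A.val 0 0) * C (A.val 1 1) - C (A.val 0 1) * C (A.val 1 0) : R2 F) = 1 := by
      rw [← map_mul, ← map_mul, ← map_sub, hdet, map_one]
    refine ⟨?_, ?_, ?_, ?_, ?_⟩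
    · rw [u0, map_add, map_mul, map_mul, e0, e1, e2, e3]
      linear_combination (X 0 * X 2 + X 1 * X 3 : R2 F) * hC
    · rw [u1, map_add, map_mul, map_mul, map_pow, map_pow, e0q, e1q, e2, e3]
      linear_combination (X 0 ^ q * X 2 + X 1 ^ q * X 3 : R2 F) * hC
    · rw [u1s, map_add, map_mul, map_mul, map_pow, map_pow, e2q, e3q, e0, e1]
      linear_combination (X 0 * X 2 ^ q + X 1 * X 3 ^ q : R2 F) * hC
    · rw [d22, map_sub, map_mul, map_mul, map_pow, map_pow, e0q, e1q, e0, e1]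
      linear_combination (X 1 * X 0 ^ q - X 0 * X 1 ^ q : R2 F) * hC
    · rw [d22s, map_sub, map_mul, map_mul, map_pow, map_pow, e2q, e3q, e2, e3]
      linear_combination (X 2 * X 3 ^ q - X 3 * X 2 ^ q : R2 F) * hC
  -- conclusion
  intro s hs
  obtain ⟨h, hh⟩ := hdvd s hs
  have hmem : ∀ A ∈ SL2 F, act A h = h := by
    intro A hA
    obtain ⟨g0, g1, g1s, gd, ge⟩ := hgen A hA
    have hS : act A (u1 F q ^ (s + 1) * d22s F q ^ (q - s - 1) + u1s F q ^ (q - s) * d22 F q ^ s)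
        = u1 F q ^ (s + 1) * d22s F q ^ (q - s - 1) + u1s F q ^ (q - s) * d22 F q ^ s := by
      rw [map_add, map_mul, map_mul, map_pow, map_pow, map_pow, map_pow, g1, g1s, gd, ge]
    have h2 : u0 F ^ q * act A h = u0 F ^ q * h := by
      have h3 := congrArg (act A) hh
      rw [hS, map_mul, map_pow, g0, hh] at h3
      exact h3.symm
    exact mul_left_cancel₀ (pow_ne_zero q hu0ne) h2
  exact ⟨h, hh.symm, hmem⟩
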